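/- arXiv:2304.07252 — 2 statements merged into one kernel-verified Lean document; each statement's English description precedes it below -/
import Mathlib

section
/- Let η ∈ L^∞(T) and let {a,b} be a nondegenerate pair in L^∞(T). Then the multiplication operator M_η commutes with S_{a,b} if and only if η is a.e. equal to a constant. -/
open MeasureTheory Complex Real AddCircle
open scoped ENNReal ComplexConjugate

noncomputable section

instance : Fact (0 < 2 * π) := ⟨by positivity⟩

/-- Normalized Haar (Lebesgue) measure on the unit circle, realized as `AddCircle (2π)`. -/
abbrev μT : Measure (AddCircle (2 * π)) := AddCircle.haarAddCircle

/-- The Lebesgue space `L²(𝕋)`. -/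
abbrev L2 : Type := Lp ℂ 2 μT

/-- The space `L^∞(𝕋)`. -/
abbrev Linf : Type := Lp ℂ ∞ μT

/-- Multiplication of an `L²` function by an `L^∞` function, as an element of `L²`. -/
def mul2 (a : Linf) (f : L2) : L2 :=
  ((Lp.memLp f).smul (r := 2) (Lp.memLp a)).toLp ((a : AddCircle (2 * π) → ℂ) • (f : AddCircle (2 * π) → ℂ))

lemma mul2_coe (a : Linf) (f : L2) :
    (mul2 a f : AddCircle (2 * π) → ℂ) =ᵐ[μT] fun x => a x * f x :=
  (MemLp.coeFn_toLp _)

/-- Multiplication in `L^∞`. -/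
def mulInf (a b : Linf) : Linf :=
  ((Lp.memLp b).smul (r := ∞) (Lp.memLp a)).toLp ((a : AddCircle (2 * π) → ℂ) • (b : AddCircle (2 * π) → ℂ))

lemma mulInf_coe (a b : Linf) :
    (mulInf a b : AddCircle (2 * π) → ℂ) =ᵐ[μT] fun x => a x * b x :=
  (MemLp.coeFn_toLp _)

/-- Complex conjugation on `Lp`. -/
def conjLp {p : ℝ≥0∞} [Fact (1 ≤ p)] (f : Lp ℂ p μT) : Lp ℂ p μT :=
  MemLp.toLp (fun x => conj (f x))
    ⟨continuous_star.comp_aestronglyMeasurable (Lp.aestronglyMeasurable f),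
      by
        rw [eLpNorm_congr_norm_ae (g := (f : AddCircle (2 * π) → ℂ))
          (Filter.Eventually.of_forall fun x => by simp)]
        exact (Lp.memLp f).2⟩

lemma conjLp_coe {p : ℝ≥0∞} [Fact (1 ≤ p)] (f : Lp ℂ p μT) :
    (conjLp f : AddCircle (2 * π) → ℂ) =ᵐ[μT] fun x => conj (f x) :=
  (MemLp.coeFn_toLp _)

/-- The Hardy space `H²`, as the subspace of `L²(𝕋)` of functions whose negative Fourier
coefficients vanish. -/
def Hardy : Submodule ℂ L2 where
  carrier := {f | ∀ n : ℤ, n < 0 → fourierBasis.repr f n = 0}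
  add_mem' := fun hf hg n hn => by simp [hf n hn, hg n hn]
  zero_mem' := fun n hn => by simp
  smul_mem' := fun c f hf n hn => by simp [hf n hn]

lemma hardy_isClosed : IsClosed (Hardy : Set L2) := by
  have h : (Hardy : Set L2)
      = ⋂ n : ℤ, ⋂ _ : n < 0, {f : L2 | fourierBasis.repr f n = 0} := by
    ext f
    simp [Hardy, Set.mem_iInter]
  rw [h]
  refine isClosed_iInter fun n => isClosed_iInter fun hn => ?_
  have hc : Continuous fun f : L2 => fourierBasis.repr f n := by
    have : (fun f : L2 => fourierBasis.repr f n)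
        = fun f : L2 => (innerSL ℂ (fourierBasis n : L2)) f := by
      ext f
      rw [HilbertBasis.repr_apply_apply]
      rfl
    rw [this]
    exact (innerSL ℂ (fourierBasis n : L2)).continuous
  exact isClosed_eq hc continuous_const

instance : CompleteSpace Hardy := hardy_isClosed.completeSpace_coe

/-- The Riesz projection `P⁺ : L² → L²`, i.e. the orthogonal projection onto `H²`. -/
def Pplus : L2 →L[ℂ] L2 := Hardy.subtypeL.comp Hardy.orthogonalProjectionOnto

/-- The complementary projection `P⁻ = I - P⁺`. -/
def Pminus : L2 →L[ℂ] L2 := ContinuousLinearMap.id ℂ L2 - Pplus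

lemma mul2_norm_le (a : Linf) (f : L2) : ‖mul2 a f‖ ≤ ‖a‖ * ‖f‖ := by
  rw [mul2, Lp.norm_toLp]
  have h := eLpNorm_smul_le_eLpNorm_top_mul_eLpNorm 2
    (Lp.aestronglyMeasurable f) (φ := (a : AddCircle (2 * π) → ℂ))
  refine le_trans (ENNReal.toReal_mono ?_ h) ?_
  · exact ENNReal.mul_ne_top (Lp.memLp a).2.ne (Lp.memLp f).2.ne
  · rw [ENNReal.toReal_mul, Lp.norm_def, Lp.norm_def]

/-- Multiplication by an `L^∞` function `a`, as a bounded operator `M_a` on `L²`. -/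
def Mult (a : Linf) : L2 →L[ℂ] L2 :=
  LinearMap.mkContinuous
    { toFun := mul2 a
      map_add' := fun f g => by
        refine Lp.ext ?_
        filter_upwards [mul2_coe a (f + g), mul2_coe a f, mul2_coe a g,
          Lp.coeFn_add f g, Lp.coeFn_add (mul2 a f) (mul2 a g)] with x h1 h2 h3 h4 h5
        simp only [h1, h5, Pi.add_apply, h2, h3, h4, mul_add]
      map_smul' := fun c f => by
        refine Lp.ext ?_
        filter_upwards [mul2_coe a (c • f), mul2_coe a f,
          Lp.coeFn_smul c f, Lp.coeFn_smul c (mul2 a f)] with x h1 h2 h3 h4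
        simp only [h1, h4, Pi.smul_apply, h2, h3, smul_eq_mul, RingHom.id_apply]
        ring }
    ‖a‖ (fun f => mul2_norm_le a f)

/-- The paired operator `S_{a,b} = a P⁺ + b P⁻` on `L²(𝕋)`. -/
def pairedS (a b : Linf) : L2 →L[ℂ] L2 :=
  (Mult a).comp Pplus + (Mult b).comp Pminus

/-- The transposed paired operator `Σ_{a,b} = P⁺ a + P⁻ b` on `L²(𝕋)`. -/
def pairedSigma (a b : Linf) : L2 →L[ℂ] L2 :=
  Pplus.comp (Mult a) + Pminus.comp (Mult b)

/-- Membership in `H^∞`: an `L^∞` function whose negative Fourier coefficients vanish. -/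
def MemHinf (a : Linf) : Prop := ∀ n : ℤ, n < 0 → fourierCoeff (a : AddCircle (2 * π) → ℂ) n = 0

/-- A pair `{a,b}` is nondegenerate if `a`, `b` and `a - b` are all nonzero a.e. on `𝕋`. -/
def Nondegenerate (a b : Linf) : Prop :=
  (∀ᵐ x ∂μT, a x ≠ 0) ∧ (∀ᵐ x ∂μT, b x ≠ 0) ∧ (∀ᵐ x ∂μT, a x - b x ≠ 0)



-- AUX SECTION
namespace Statement8Aux

local notation "𝕋" => AddCircle (2 * π)

lemma Mult_apply (a : Linf) (f : L2) : Mult a f = mul2 a f := rfl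

lemma Mult_coe (a : Linf) (f : L2) :
    (Mult a f : 𝕋 → ℂ) =ᵐ[μT] fun x => a x * f x := mul2_coe a f

lemma mult_commute (u v : Linf) (f : L2) : Mult u (Mult v f) = Mult v (Mult u f) := by
  refine Lp.ext ?_
  filter_upwards [Mult_coe u (Mult v f), Mult_coe v (Mult u f),
    Mult_coe v f, Mult_coe u f] with x h1 h2 h3 h4
  rw [h1, h2, h3, h4]; ring

lemma mult_sub (a b : Linf) (f : L2) : Mult a f - Mult b f = Mult (a - b) f := by
  refine Lp.ext ?_
  filter_upwards [Mult_coe (a - b) f, Mult_coe a f, Mult_coe b f,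
    Lp.coeFn_sub (Mult a f) (Mult b f), Lp.coeFn_sub a b] with x h1 h2 h3 h4 h5
  rw [h4, Pi.sub_apply, h1, h2, h3, h5, Pi.sub_apply, sub_mul]

lemma mult_inj (c : Linf) (hc : ∀ᵐ x ∂μT, c x ≠ 0) {f : L2} (hf : Mult c f = 0) :
    f = 0 := by
  refine Lp.ext ?_
  have h0 : (Mult c f : 𝕋 → ℂ) =ᵐ[μT] 0 := hf ▸ Lp.coeFn_zero ℂ 2 μT
  filter_upwards [Mult_coe c f, h0, hc, Lp.coeFn_zero ℂ 2 μT] with x h1 h2 h3 h4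
  rw [h4]
  have : c x * f x = 0 := by rw [← h1, h2]; rfl
  rcases mul_eq_zero.mp this with h | h
  · exact absurd h h3
  · exact h

lemma mem_Hardy_iff (f : L2) : f ∈ Hardy ↔ ∀ n : ℤ, n < 0 → fourierBasis.repr f n = 0 :=
  Iff.rfl

lemma Pplus_apply (f : L2) : Pplus f = (Hardy.orthogonalProjectionOnto f : L2) := rfl

lemma repr_Pplus_neg (f : L2) {n : ℤ} (hn : n < 0) : fourierBasis.repr (Pplus f) n = 0 :=
  (Hardy.orthogonalProjectionOnto f).2 n hn

lemma fourierBasis_mem_Hardy {n : ℤ} (hn : 0 ≤ n) : (fourierBasis n : L2) ∈ Hardy := by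
  intro m hm
  rw [fourierBasis.repr_self]
  exact lp.single_apply_ne (E := fun _ : ℤ => ℂ) 2 n 1 (show m ≠ n by omega)

lemma repr_Pplus_nonneg (f : L2) {n : ℤ} (hn : 0 ≤ n) :
    fourierBasis.repr (Pplus f) n = fourierBasis.repr f n := by
  have horth : f - Pplus f ∈ Hardyᗮ := Submodule.sub_starProjection_mem_orthogonal (K := Hardy) f
  have h0 : inner ℂ ((fourierBasis n : L2)) (f - Pplus f) = (0 : ℂ) :=
    Submodule.inner_right_of_mem_orthogonal (fourierBasis_mem_Hardy hn) horth
  rw [inner_sub_right, sub_eq_zero] at h0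
  rw [fourierBasis.repr_apply_apply, fourierBasis.repr_apply_apply]
  exact h0.symm

lemma Pplus_e0 : Pplus (fourierBasis (0 : ℤ)) = fourierBasis (0 : ℤ) := by
  have h : (fourierBasis (0 : ℤ) : L2) ∈ Hardy := fourierBasis_mem_Hardy le_rfl
  rw [Pplus_apply]
  have := Submodule.orthogonalProjectionOnto_mem_subspace_eq_self (K := Hardy) ⟨_, h⟩
  rw [this]

lemma Pplus_em1 : Pplus (fourierBasis (-1 : ℤ)) = 0 := by
  have h : (fourierBasis (-1 : ℤ) : L2) ∈ Hardyᗮ := by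
    intro u hu
    have : fourierBasis.repr u (-1) = 0 := hu (-1) (by norm_num)
    rw [fourierBasis.repr_apply_apply] at this
    rw [← inner_conj_symm, this, map_zero]
  rw [Pplus_apply, Submodule.orthogonalProjectionOnto_apply_of_mem_orthogonal h,
    Submodule.coe_zero]

lemma fourierCoeff_congr {f g : 𝕋 → ℂ} (h : f =ᵐ[μT] g) (n : ℤ) :
    fourierCoeff f n = fourierCoeff g n := by
  unfold fourierCoeff
  exact integral_congr_ae (h.mono fun x hx => by simp only [hx])

lemma repr_mult (u : Linf) (m n : ℤ) :
    fourierBasis.repr (Mult u (fourierBasis m)) n = fourierCoeff (u : 𝕋 → ℂ) (n - m) := by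
  rw [fourierBasis_repr]
  have h1 : (Mult u (fourierBasis m) : 𝕋 → ℂ) =ᵐ[μT] fun x => u x * fourier m x := by
    filter_upwards [Mult_coe u (fourierBasis m),
      coe_fourierBasis (T := 2 * π) ▸ coeFn_fourierLp (T := 2 * π) 2 m] with x h1 h2
    rw [h1, h2]
  rw [fourierCoeff_congr h1]
  unfold fourierCoeff
  refine integral_congr_ae (Filter.Eventually.of_forall fun x => ?_)
  show fourier (-n) x • ((u : 𝕋 → ℂ) x * fourier m x) = fourier (-(n - m)) x • (u : 𝕋 → ℂ) x
  have hf : @fourier (2 * π) (-(n - m)) x = fourier (-n) x * fourier m x := by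
    rw [← fourier_add]; congr 1; ring
  rw [hf, smul_eq_mul, smul_eq_mul]; ring

lemma repr_eq_imp_eq {f g : L2} (h : ∀ n : ℤ, fourierBasis.repr f n = fourierBasis.repr g n) :
    f = g :=
  fourierBasis.repr.injective (lp.ext (funext h))

end Statement8Aux

open Statement8Aux in
/-- For `η ∈ L^∞` and nondegenerate `{a,b}`, `M_η` commutes with `S_{a,b}` iff `η` is
a.e. equal to a constant. -/
theorem statement8 (η a b : Linf) (h : Nondegenerate a b) :
    (Mult η).comp (pairedS a b) = (pairedS a b).comp (Mult η)
      ↔ ∃ c : ℂ, ∀ᵐ x ∂μT, η x = c := by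
  constructor
  · intro hcomm
    -- Step 1: M_η commutes with P⁺
    have step1 : ∀ f : L2, Mult η (Pplus f) = Pplus (Mult η f) := by
      intro f
      have h1 := ContinuousLinearMap.ext_iff.mp hcomm f
      simp only [ContinuousLinearMap.comp_apply, pairedS, Pminus,
        ContinuousLinearMap.add_apply, ContinuousLinearMap.sub_apply,
        ContinuousLinearMap.id_apply, map_add, map_sub] at h1
      rw [mult_commute η a, mult_commute η b (Pplus f), mult_commute η b f] at h1
      -- h1 : A (E (P f)) + (B (E f) - B (E (P f))) = A (P (E f)) + (B (E f) - B (P (E f)))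
      have h3 : Mult a (Mult η (Pplus f)) - Mult b (Mult η (Pplus f))
          = Mult a (Pplus (Mult η f)) - Mult b (Pplus (Mult η f)) := by
        calc Mult a (Mult η (Pplus f)) - Mult b (Mult η (Pplus f))
            = (Mult a (Mult η (Pplus f))
                + (Mult b (Mult η f) - Mult b (Mult η (Pplus f)))) - Mult b (Mult η f) := by
              abel
          _ = (Mult a (Pplus (Mult η f))
                + (Mult b (Mult η f) - Mult b (Pplus (Mult η f)))) - Mult b (Mult η f) := by
              rw [h1]
          _ = Mult a (Pplus (Mult η f)) - Mult b (Pplus (Mult η f)) := by abel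
      have h4 : Mult (a - b) (Mult η (Pplus f) - Pplus (Mult η f)) = 0 := by
        rw [map_sub, ← mult_sub, ← mult_sub, h3, sub_self]
      have hab : ∀ᵐ x ∂μT, ((a - b : Linf) : AddCircle (2 * π) → ℂ) x ≠ 0 := by
        filter_upwards [h.2.2, Lp.coeFn_sub a b] with x hx1 hx2
        rw [hx2, Pi.sub_apply]; exact hx1
      have h5 := mult_inj (a - b) hab h4
      exact sub_eq_zero.mp h5
    -- Negative Fourier coefficients of η vanish
    have hneg : ∀ n : ℤ, n < 0 → fourierCoeff (η : AddCircle (2 * π) → ℂ) n = 0 := by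
      intro n hn
      have he0 := step1 (fourierBasis (0 : ℤ))
      rw [Pplus_e0] at he0
      have h0 := repr_Pplus_neg (Mult η (fourierBasis (0 : ℤ))) hn
      rw [← he0, repr_mult] at h0
      simpa using h0
    -- Positive Fourier coefficients of η vanish
    have hpos : ∀ n : ℤ, 0 < n → fourierCoeff (η : AddCircle (2 * π) → ℂ) n = 0 := by
      intro n hn
      have he1 := step1 (fourierBasis (-1 : ℤ))
      rw [Pplus_em1, map_zero] at he1
      have h0 := repr_Pplus_nonneg (Mult η (fourierBasis (-1 : ℤ))) (show (0:ℤ) ≤ n - 1 by omega)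
      rw [← he1, repr_mult] at h0
      have hz : fourierBasis.repr (0 : L2) (n - 1) = 0 := by simp
      rw [hz] at h0
      have hn1 : n - 1 - -1 = n := by omega
      rw [hn1] at h0
      exact h0.symm
    set c : ℂ := fourierCoeff (η : AddCircle (2 * π) → ℂ) 0 with hc
    -- M_η e₀ = c • e₀
    have hkey : Mult η (fourierBasis (0 : ℤ)) = c • fourierBasis (0 : ℤ) := by
      apply repr_eq_imp_eq
      intro n
      rw [repr_mult η 0 n]
      have hs := _root_.map_smul (fourierBasis (T := 2 * π)).repr c ((fourierBasis (0 : ℤ)) : L2)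
      rw [hs]
      have hr : (fourierBasis (T := 2 * π)).repr ((fourierBasis (0 : ℤ)) : L2) n
          = (lp.single 2 (0 : ℤ) (1 : ℂ) : lp (fun _ : ℤ => ℂ) 2) n := by
        rw [HilbertBasis.repr_self]
      rcases lt_trichotomy n 0 with h0 | h0 | h0
      · rw [hneg (n - 0) (by omega)]
        have : (lp.single 2 (0 : ℤ) (1 : ℂ) : lp (fun _ : ℤ => ℂ) 2) n = 0 :=
          lp.single_apply_ne (E := fun _ : ℤ => ℂ) 2 0 1 (show n ≠ 0 by omega)
        simp only [lp.coeFn_smul, Pi.smul_apply, hr, this, smul_zero]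
      · subst h0
        have : (lp.single 2 (0 : ℤ) (1 : ℂ) : lp (fun _ : ℤ => ℂ) 2) 0 = 1 :=
          lp.single_apply_self (E := fun _ : ℤ => ℂ) 2 0 1
        simp only [lp.coeFn_smul, Pi.smul_apply, hr, this, smul_eq_mul, mul_one, sub_zero, hc]
      · rw [hpos (n - 0) (by omega)]
        have : (lp.single 2 (0 : ℤ) (1 : ℂ) : lp (fun _ : ℤ => ℂ) 2) n = 0 :=
          lp.single_apply_ne (E := fun _ : ℤ => ℂ) 2 0 1 (show n ≠ 0 by omega)
        simp only [lp.coeFn_smul, Pi.smul_apply, hr, this, smul_zero]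
    refine ⟨c, ?_⟩
    have he0coe : ((fourierBasis (0 : ℤ) : L2) : AddCircle (2 * π) → ℂ) =ᵐ[μT] fun _ => 1 := by
      filter_upwards [coe_fourierBasis (T := 2 * π) ▸ coeFn_fourierLp (T := 2 * π) 2 0] with x hx
      rw [hx]
      exact fourier_zero
    have h1 : (Mult η (fourierBasis (0 : ℤ)) : AddCircle (2 * π) → ℂ)
        =ᵐ[μT] ((c • fourierBasis (0 : ℤ) : L2) : AddCircle (2 * π) → ℂ) := hkey ▸ .rfl
    filter_upwards [Mult_coe η (fourierBasis (0 : ℤ)), h1,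
      Lp.coeFn_smul c (fourierBasis (0 : ℤ) : L2), he0coe] with x hx1 hx2 hx3 hx4
    have : η x * 1 = c • (1 : ℂ) := by rw [← hx4, ← hx1, hx2, hx3, Pi.smul_apply, hx4]
    simpa using this
  · rintro ⟨c, hc⟩
    have hM : ∀ f : L2, Mult η f = c • f := by
      intro f
      refine Lp.ext ?_
      filter_upwards [Mult_coe η f, Lp.coeFn_smul c f, hc] with x h1 h2 h3
      rw [h1, h2, Pi.smul_apply, h3, smul_eq_mul]
    ext f
    simp only [ContinuousLinearMap.comp_apply]
    rw [hM, hM f, _root_.map_smul]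

end
end

section
/- Let a, b ∈ L^∞(T), both nonzero (in L^∞). If a ∈ H^∞ and b̄ ∈ H^∞, then ker(aP^+ + bP^-) = {0} in L^2(T). -/
open MeasureTheory Complex Real AddCircle
open scoped ENNReal ComplexConjugate

noncomputable section

lemma fourierCoeff_congr_ae' {f g : AddCircle (2 * π) → ℂ} (h : f =ᵐ[μT] g) (n : ℤ) :
    fourierCoeff f n = fourierCoeff g n :=
  integral_congr_ae (h.mono fun x hx => by simp only [hx])

/-- `L^∞` embeds in `L²` on a probability space. -/
def toL2 (a : Linf) : L2 := ((Lp.memLp a).mono_exponent le_top).toLp a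

lemma toL2_coe (a : Linf) : (toL2 a : AddCircle (2 * π) → ℂ) =ᵐ[μT] a := MemLp.coeFn_toLp _

lemma repr_eq_coeff (g : L2) (n : ℤ) :
    fourierBasis.repr g n = fourierCoeff (g : AddCircle (2 * π) → ℂ) n :=
  fourierBasis_repr (T := 2 * π) g n

lemma exists_coeff_ne_zero {a : Linf} (ha : a ≠ 0) :
    ∃ m : ℤ, fourierCoeff (a : AddCircle (2 * π) → ℂ) m ≠ 0 := by
  by_contra h
  push_neg at h
  apply ha
  have h2 : toL2 a = 0 := by
    have hr : fourierBasis.repr (toL2 a) = 0 := by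
      apply lp.ext
      funext m
      rw [repr_eq_coeff (toL2 a) m, fourierCoeff_congr_ae' (toL2_coe a) m]
      simpa using h m
    simpa using congrArg (fourierBasis (T := 2 * π)).repr.symm hr
  have h3 : (a : AddCircle (2 * π) → ℂ) =ᵐ[μT] 0 :=
    ((toL2_coe a).symm.trans (by rw [h2]; exact Lp.coeFn_zero ℂ 2 μT))
  exact Lp.ext (h3.trans (Lp.coeFn_zero ℂ ∞ μT).symm)
lemma fourierCoeff_conj (g : AddCircle (2 * π) → ℂ) (n : ℤ) :
    fourierCoeff (fun x => conj (g x)) n = conj (fourierCoeff g (-n)) := by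
  simp only [fourierCoeff, ← integral_conj]
  refine integral_congr_ae (Filter.Eventually.of_forall fun x => ?_)
  simp only [smul_eq_mul, map_mul, neg_neg, ← fourier_neg]

/-- The convolution formula for Fourier coefficients of a product `u · v`, `u ∈ L^∞`, `v ∈ L²`. -/
lemma hasSum_coeff_mul2 (u : Linf) (v : L2) (n : ℤ) :
    HasSum (fun k : ℤ => fourierBasis.repr v k * fourierCoeff (u : AddCircle (2 * π) → ℂ) (n - k))
      (fourierBasis.repr (mul2 u v) n) := by
  classical
  set Φ : L2 →L[ℂ] ℂ :=
    ((innerSL ℂ ((fourierBasis (T := 2 * π)) n : L2)).comp (Mult u)) with hΦ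
  have hΦ_apply : ∀ w : L2, Φ w = fourierBasis.repr (mul2 u w) n := by
    intro w
    have : Φ w = inner ℂ ((fourierBasis (T := 2 * π)) n : L2) (mul2 u w) := rfl
    rw [this, ← HilbertBasis.repr_apply_apply]
  have h1 : HasSum (fun k : ℤ => fourierBasis.repr v k • Φ ((fourierBasis (T := 2 * π)) k))
      (Φ v) := by
    have := ((fourierBasis (T := 2 * π)).hasSum_repr v).mapL Φ
    simpa using this
  have h2 : ∀ k : ℤ, Φ ((fourierBasis (T := 2 * π)) k)
      = fourierCoeff (u : AddCircle (2 * π) → ℂ) (n - k) := by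
    intro k
    rw [hΦ_apply, repr_eq_coeff]
    have hk : ((fourierBasis (T := 2 * π)) k : L2) = fourierLp 2 k :=
      congrFun (coe_fourierBasis (T := 2 * π)) k
    have h2' : ((fourierBasis (T := 2 * π)) k : AddCircle (2 * π) → ℂ) =ᵐ[μT] fourier k := by
      rw [hk]; exact coeFn_fourierLp (T := 2 * π) 2 k
    have hae : (mul2 u ((fourierBasis (T := 2 * π)) k) : AddCircle (2 * π) → ℂ)
        =ᵐ[μT] fun x => u x * fourier k x := by
      filter_upwards [mul2_coe u ((fourierBasis (T := 2 * π)) k), h2'] with x h1 h2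
      rw [h1, h2]
    rw [fourierCoeff_congr_ae' hae]
    simp only [fourierCoeff, smul_eq_mul]
    refine integral_congr_ae (Filter.Eventually.of_forall fun x => ?_)
    show (fourier (-n)) x * (u x * (fourier k) x) = (fourier (-(n - k))) x * u x
    rw [show -(n - k) = -n + k by ring, fourier_add]
    ring
  rw [← hΦ_apply v]
  simpa only [h2, smul_eq_mul] using h1
/-- If the (Cauchy) convolution of two sequences vanishes and the second is nonzero, the first
vanishes: `ℂ⟦X⟧` is an integral domain. -/
lemma conv_eq_zero {α φ : ℕ → ℂ} (hα : α ≠ 0)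
    (h : ∀ n : ℕ, ∑ k ∈ Finset.range (n + 1), φ k * α (n - k) = 0) : φ = 0 := by
  have hmul : PowerSeries.mk φ * PowerSeries.mk α = 0 := by
    ext n
    rw [PowerSeries.coeff_mul, Finset.Nat.sum_antidiagonal_eq_sum_range_succ_mk]
    simpa using h n
  rcases mul_eq_zero.mp hmul with hF | hA
  · funext k
    simpa using congrArg (PowerSeries.coeff k) hF
  · exact absurd (funext fun k => by simpa using congrArg (PowerSeries.coeff k) hA) hα

lemma repr_Pplus_neg (f : L2) {n : ℤ} (hn : n < 0) : fourierBasis.repr (Pplus f) n = 0 :=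
  (Hardy.orthogonalProjectionOnto f).2 n hn

lemma fourierBasis_mem_Hardy {k : ℤ} (hk : 0 ≤ k) : ((fourierBasis (T := 2 * π)) k : L2) ∈ Hardy := by
  intro m hm
  rw [show fourierBasis.repr ((fourierBasis (T := 2 * π)) k) = (lp.single 2 k 1 : lp (fun _ : ℤ => ℂ) 2) from HilbertBasis.repr_self (fourierBasis (T := 2 * π)) k]
  exact lp.single_apply_ne (E := fun _ : ℤ => ℂ) 2 k (1 : ℂ) (by omega : m ≠ k)

lemma repr_Pminus_nonneg (f : L2) {n : ℤ} (hn : 0 ≤ n) : fourierBasis.repr (Pminus f) n = 0 := by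
  have hmem : Pminus f ∈ Hardyᗮ := by
    have : Pminus f = f - (Hardy.orthogonalProjectionOnto f : L2) := rfl
    rw [this]
    exact Submodule.sub_starProjection_mem_orthogonal (K := Hardy) f
  rw [HilbertBasis.repr_apply_apply]
  exact hmem _ (fourierBasis_mem_Hardy hn)
lemma L2_eq_zero_of_repr {g : L2} (h : ∀ n : ℤ, fourierBasis.repr g n = 0) : g = 0 := by
  have hr : fourierBasis.repr g = 0 := by
    apply lp.ext
    funext m
    simpa using h m
  simpa using congrArg (fourierBasis (T := 2 * π)).repr.symm hr

lemma tsum_int_eq_range_sum {g : ℤ → ℂ} {N : ℕ} (h1 : ∀ k : ℤ, k < 0 → g k = 0)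
    (h2 : ∀ k : ℤ, (N : ℤ) < k → g k = 0) :
    ∑' k : ℤ, g k = ∑ j ∈ Finset.range (N + 1), g (j : ℤ) := by
  classical
  rw [tsum_eq_sum (s := Finset.image (fun j : ℕ => (j : ℤ)) (Finset.range (N + 1)))
    (fun k hk => ?_), Finset.sum_image (by intro x _ y _ h; beta_reduce at h; exact_mod_cast h)]
  rcases lt_or_ge k 0 with hk' | hk'
  · exact h1 k hk'
  · refine h2 k ?_
    by_contra hcon
    push_neg at hcon
    exact hk (Finset.mem_image.2 ⟨k.toNat, Finset.mem_range.2 (by omega), by omega⟩)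

lemma tsum_int_eq_range_sum_neg {g : ℤ → ℂ} {N : ℕ} (h1 : ∀ k : ℤ, 0 ≤ k → g k = 0)
    (h2 : ∀ k : ℤ, k < -1 - (N : ℤ) → g k = 0) :
    ∑' k : ℤ, g k = ∑ j ∈ Finset.range (N + 1), g (-1 - (j : ℤ)) := by
  classical
  rw [tsum_eq_sum (s := Finset.image (fun j : ℕ => (-1 - (j : ℤ))) (Finset.range (N + 1)))
    (fun k hk => ?_), Finset.sum_image (by intro x _ y _ h; beta_reduce at h; omega)]
  rcases le_or_gt 0 k with hk' | hk'
  · exact h1 k hk'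
  · refine h2 k ?_
    by_contra hcon
    push_neg at hcon
    exact hk (Finset.mem_image.2 ⟨(-1 - k).toNat, Finset.mem_range.2 (by omega), by omega⟩)
/-- If `a, b ∈ L^∞` are nonzero with `a ∈ H^∞` and `b̄ ∈ H^∞`, then
`ker (a P⁺ + b P⁻) = {0}`. -/
theorem statement11 (a b : Linf) (ha : a ≠ 0) (hb : b ≠ 0)
    (haH : MemHinf a) (hbH : MemHinf (conjLp b)) :
    ∀ f : L2, pairedS a b f = 0 → f = 0 := by
  classical
  intro f hf
  set fp : L2 := Pplus f with hfp
  set fm : L2 := Pminus f with hfm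
  have hfp0 : ∀ k : ℤ, k < 0 → fourierBasis.repr fp k = 0 := fun k hk => repr_Pplus_neg f hk
  have hfm0 : ∀ k : ℤ, 0 ≤ k → fourierBasis.repr fm k = 0 := fun k hk => repr_Pminus_nonneg f hk
  have hb0 : ∀ m : ℤ, 0 < m → fourierCoeff (b : AddCircle (2 * π) → ℂ) m = 0 := by
    intro m hm
    have h1 := hbH (-m) (by omega)
    rw [fourierCoeff_congr_ae' (conjLp_coe b) (-m), fourierCoeff_conj] at h1
    rw [neg_neg] at h1
    simpa using h1
  -- the L² equation
  have hsum : mul2 a fp = - mul2 b fm := by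
    have h0 : mul2 a fp + mul2 b fm = 0 := by
      have : pairedS a b f = Mult a fp + Mult b fm := by
        simp [pairedS, hfp, hfm]
      rw [this] at hf
      exact hf
    exact eq_neg_of_add_eq_zero_left h0
  -- all Fourier coefficients of both products vanish
  have key : ∀ n : ℤ, fourierBasis.repr (mul2 a fp) n = 0 ∧ fourierBasis.repr (mul2 b fm) n = 0 := by
    intro n
    have hneg : fourierBasis.repr (mul2 a fp) n = - fourierBasis.repr (mul2 b fm) n := by
      rw [hsum]; simp
    rcases lt_or_ge n 0 with hn | hn
    · have hA : fourierBasis.repr (mul2 a fp) n = 0 := by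
        have h := hasSum_coeff_mul2 a fp n
        have hz : (fun k : ℤ => fourierBasis.repr fp k
            * fourierCoeff (a : AddCircle (2 * π) → ℂ) (n - k)) = fun _ => 0 := by
          funext k
          rcases lt_or_ge k 0 with hk | hk
          · rw [hfp0 k hk, zero_mul]
          · rw [haH (n - k) (by omega), mul_zero]
        rw [hz] at h
        exact (hasSum_zero.unique h).symm
      exact ⟨hA, by rw [hA] at hneg; exact neg_eq_zero.mp hneg.symm⟩
    · have hB : fourierBasis.repr (mul2 b fm) n = 0 := by
        have h := hasSum_coeff_mul2 b fm n
        have hz : (fun k : ℤ => fourierBasis.repr fm k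
            * fourierCoeff (b : AddCircle (2 * π) → ℂ) (n - k)) = fun _ => 0 := by
          funext k
          rcases le_or_gt 0 k with hk | hk
          · rw [hfm0 k hk, zero_mul]
          · rw [hb0 (n - k) (by omega), mul_zero]
        rw [hz] at h
        exact (hasSum_zero.unique h).symm
      exact ⟨by rw [hneg, hB, neg_zero], hB⟩
  -- the positive part vanishes
  have hfp_zero : fp = 0 := by
    have hconv : ∀ N : ℕ, ∑ k ∈ Finset.range (N + 1),
        (fun k : ℕ => fourierBasis.repr fp (k : ℤ)) k
          * (fun m : ℕ => fourierCoeff (a : AddCircle (2 * π) → ℂ) (m : ℤ)) (N - k) = 0 := by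
      intro N
      have h := (hasSum_coeff_mul2 a fp (N : ℤ)).tsum_eq
      have hS := tsum_int_eq_range_sum
        (g := fun k : ℤ => fourierBasis.repr fp k
          * fourierCoeff (a : AddCircle (2 * π) → ℂ) ((N : ℤ) - k)) (N := N)
        (fun k hk => by simp only [hfp0 k hk, zero_mul])
        (fun k hk => by simp only [haH ((N : ℤ) - k) (by omega), mul_zero])
      rw [hS] at h
      refine Eq.trans (Finset.sum_congr rfl fun j hj => ?_) (h.trans (key (N : ℤ)).1)
      have hjN : j ≤ N := by simpa [Nat.lt_succ_iff] using hj
      simp only []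
      congr 2
      omega
    have hαne : (fun m : ℕ => fourierCoeff (a : AddCircle (2 * π) → ℂ) (m : ℤ)) ≠ 0 := by
      obtain ⟨m, hm⟩ := exists_coeff_ne_zero ha
      have hm0 : 0 ≤ m := by
        by_contra hc
        exact hm (haH m (by omega))
      intro hcon
      apply hm
      have h2 := congrFun hcon m.toNat
      simpa [Int.toNat_of_nonneg hm0] using h2
    have hφ0 := conv_eq_zero hαne hconv
    refine L2_eq_zero_of_repr fun n => ?_
    rcases lt_or_ge n 0 with hn | hn
    · exact hfp0 n hn
    · have h2 := congrFun hφ0 n.toNat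
      simpa [Int.toNat_of_nonneg hn] using h2
  -- the negative part vanishes
  have hfm_zero : fm = 0 := by
    have hconv : ∀ N : ℕ, ∑ k ∈ Finset.range (N + 1),
        (fun k : ℕ => fourierBasis.repr fm (-1 - (k : ℤ))) k
          * (fun m : ℕ => fourierCoeff (b : AddCircle (2 * π) → ℂ) (-(m : ℤ))) (N - k) = 0 := by
      intro N
      have h := (hasSum_coeff_mul2 b fm (-1 - (N : ℤ))).tsum_eq
      have hS := tsum_int_eq_range_sum_neg
        (g := fun k : ℤ => fourierBasis.repr fm k
          * fourierCoeff (b : AddCircle (2 * π) → ℂ) ((-1 - (N : ℤ)) - k)) (N := N)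
        (fun k hk => by simp only [hfm0 k hk, zero_mul])
        (fun k hk => by simp only [hb0 ((-1 - (N : ℤ)) - k) (by omega), mul_zero])
      rw [hS] at h
      refine Eq.trans (Finset.sum_congr rfl fun j hj => ?_) (h.trans (key (-1 - (N : ℤ))).2)
      have hjN : j ≤ N := by simpa [Nat.lt_succ_iff] using hj
      simp only []
      congr 2
      omega
    have hαne : (fun m : ℕ => fourierCoeff (b : AddCircle (2 * π) → ℂ) (-(m : ℤ))) ≠ 0 := by
      obtain ⟨m, hm⟩ := exists_coeff_ne_zero hb
      have hm0 : m ≤ 0 := by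
        by_contra hc
        exact hm (hb0 m (by omega))
      intro hcon
      apply hm
      have h2 : fourierCoeff (b : AddCircle (2 * π) → ℂ) (-(((-m).toNat : ℕ) : ℤ)) = 0 :=
        congrFun hcon (-m).toNat
      rwa [show -(((-m).toNat : ℕ) : ℤ) = m by omega] at h2
    have hφ0 := conv_eq_zero hαne hconv
    refine L2_eq_zero_of_repr fun n => ?_
    rcases le_or_gt 0 n with hn | hn
    · exact hfm0 n hn
    · have h2 : fourierBasis.repr fm (-1 - ((((-1 - n).toNat : ℕ)) : ℤ)) = 0 :=
        congrFun hφ0 (-1 - n).toNat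
      rwa [show -1 - (((-1 - n).toNat : ℕ) : ℤ) = n by omega] at h2
  have hdecomp : f = fp + fm := by
    simp [hfp, hfm, Pminus]
  rw [hdecomp, hfp_zero, hfm_zero, add_zero]

end
end
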